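/- arXiv:2501.13892 — 3 statements merged into one kernel-verified Lean document; each statement's English description precedes it below -/
import Mathlib

section
/- Let α, β, γ, η > 0 and let g : ℝ → ℝ be an even Schwartz function whose Fourier transform satisfies ĝ ≥ 0 and 0 < ∫_0^∞ ĝ(ξ) ξ²/(1 + β²ξ²)² dξ < ∞. Define η* = (π/(α²γ)) · (∫_0^∞ ĝ(ξ) ξ²/(1 + β²ξ²)² dξ)^{−1}. Then there exists v > 0 satisfying (η/π) ∫_0^∞ α²γ ĝ(ξ) ξ²/((1 + β²ξ²)² + α²v²ξ²) dξ = 1 if and only if η > η*; moreover, when it exists, such v > 0 is unique. -/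
open MeasureTheory Real Complex

noncomputable section

/-- Fourier transform with the convention `f̂(ξ) = ∫ f(x) e^{-i x ξ} dx`. -/
def fourierHat (g : ℝ → ℝ) (ξ : ℝ) : ℂ :=
  ∫ x : ℝ, (g x : ℂ) * Complex.exp (-(Complex.I * x * ξ))

open Filter Topology Set

lemma fourierHat_continuous (g : SchwartzMap ℝ ℝ) : Continuous (fourierHat ⇑g) := by
  apply MeasureTheory.continuous_of_dominated (bound := fun x => |g x|)
  · intro ξ
    exact (Continuous.mul (by continuity) (by continuity)).aestronglyMeasurable
  · intro ξ
    filter_upwards with x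
    rw [norm_mul]
    have h1 : ‖((g x : ℝ) : ℂ)‖ = |g x| := by simp [Complex.norm_real]
    have h2 : ‖Complex.exp (-(Complex.I * x * ξ))‖ = 1 := by
      rw [Complex.norm_exp]
      simp [Complex.mul_re, Complex.mul_im]
    rw [h1, h2, mul_one]
  · exact g.integrable.abs
  · filter_upwards with x
    continuity

/-- The velocity integral. -/
def velInt (α β γ : ℝ) (g : ℝ → ℝ) (v : ℝ) : ℝ :=
  ∫ ξ in Set.Ioi (0 : ℝ),
    α ^ 2 * γ * (fourierHat g ξ).re * ξ ^ 2 /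
      ((1 + β ^ 2 * ξ ^ 2) ^ 2 + α ^ 2 * v ^ 2 * ξ ^ 2)

section Aux

variable {α β γ : ℝ} {g : SchwartzMap ℝ ℝ}

lemma vel_denom_pos (α β v ξ : ℝ) :
    0 < (1 + β ^ 2 * ξ ^ 2) ^ 2 + α ^ 2 * v ^ 2 * ξ ^ 2 := by positivity

lemma vel_num_nonneg (hγ : 0 < γ) (hg_pos : ∀ ξ, 0 ≤ (fourierHat (⇑g) ξ).re) (ξ : ℝ) :
    0 ≤ α ^ 2 * γ * (fourierHat (⇑g) ξ).re * ξ ^ 2 :=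
  mul_nonneg (mul_nonneg (by positivity) (hg_pos ξ)) (sq_nonneg ξ)

lemma vel_f_nonneg (hγ : 0 < γ) (hg_pos : ∀ ξ, 0 ≤ (fourierHat (⇑g) ξ).re) (v ξ : ℝ) :
    0 ≤ α ^ 2 * γ * (fourierHat (⇑g) ξ).re * ξ ^ 2 /
      ((1 + β ^ 2 * ξ ^ 2) ^ 2 + α ^ 2 * v ^ 2 * ξ ^ 2) :=
  div_nonneg (vel_num_nonneg hγ hg_pos ξ) (vel_denom_pos α β v ξ).le

lemma vel_f_le (hγ : 0 < γ) (hg_pos : ∀ ξ, 0 ≤ (fourierHat (⇑g) ξ).re) (v ξ : ℝ) :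
    α ^ 2 * γ * (fourierHat (⇑g) ξ).re * ξ ^ 2 /
      ((1 + β ^ 2 * ξ ^ 2) ^ 2 + α ^ 2 * v ^ 2 * ξ ^ 2) ≤
    α ^ 2 * γ * ((fourierHat (⇑g) ξ).re * ξ ^ 2 / (1 + β ^ 2 * ξ ^ 2) ^ 2) := by
  have h1 : α ^ 2 * γ * (fourierHat (⇑g) ξ).re * ξ ^ 2 /
      ((1 + β ^ 2 * ξ ^ 2) ^ 2 + α ^ 2 * v ^ 2 * ξ ^ 2) ≤
      α ^ 2 * γ * (fourierHat (⇑g) ξ).re * ξ ^ 2 / (1 + β ^ 2 * ξ ^ 2) ^ 2 :=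
    div_le_div_of_nonneg_left (vel_num_nonneg hγ hg_pos ξ) (by positivity)
      (le_add_of_nonneg_right (by positivity))
  calc _ ≤ α ^ 2 * γ * (fourierHat (⇑g) ξ).re * ξ ^ 2 / (1 + β ^ 2 * ξ ^ 2) ^ 2 := h1
    _ = α ^ 2 * γ * ((fourierHat (⇑g) ξ).re * ξ ^ 2 / (1 + β ^ 2 * ξ ^ 2) ^ 2) := by ring

lemma vel_meas (v : ℝ) : AEStronglyMeasurable
    (fun ξ : ℝ => α ^ 2 * γ * (fourierHat (⇑g) ξ).re * ξ ^ 2 /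
      ((1 + β ^ 2 * ξ ^ 2) ^ 2 + α ^ 2 * v ^ 2 * ξ ^ 2))
    (volume.restrict (Set.Ioi 0)) := by
  have hc : Continuous fun ξ : ℝ => α ^ 2 * γ * (fourierHat (⇑g) ξ).re * ξ ^ 2 /
      ((1 + β ^ 2 * ξ ^ 2) ^ 2 + α ^ 2 * v ^ 2 * ξ ^ 2) := by
    apply Continuous.div
    · exact ((continuous_const.mul
        (Complex.continuous_re.comp (fourierHat_continuous g))).mul (continuous_pow 2))
    · continuity
    · intro ξ; exact (vel_denom_pos α β v ξ).ne'
  exact hc.aestronglyMeasurable.restrict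

lemma vel_integrable (hγ : 0 < γ) (hg_pos : ∀ ξ, 0 ≤ (fourierHat (⇑g) ξ).re)
    (hg_int : IntegrableOn
      (fun ξ => (fourierHat (⇑g) ξ).re * ξ ^ 2 / (1 + β ^ 2 * ξ ^ 2) ^ 2) (Set.Ioi 0))
    (v : ℝ) : IntegrableOn
      (fun ξ => α ^ 2 * γ * (fourierHat (⇑g) ξ).re * ξ ^ 2 /
        ((1 + β ^ 2 * ξ ^ 2) ^ 2 + α ^ 2 * v ^ 2 * ξ ^ 2)) (Set.Ioi 0) := by
  refine (hg_int.const_mul (α ^ 2 * γ)).mono' (vel_meas v) ?_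
  filter_upwards with ξ
  rw [Real.norm_eq_abs, _root_.abs_of_nonneg (vel_f_nonneg hγ hg_pos v ξ)]
  exact vel_f_le hγ hg_pos v ξ

lemma velInt_zero :
    velInt α β γ (⇑g) 0 = α ^ 2 * γ *
      ∫ ξ in Set.Ioi (0 : ℝ), (fourierHat (⇑g) ξ).re * ξ ^ 2 / (1 + β ^ 2 * ξ ^ 2) ^ 2 := by
  rw [velInt]
  have h : ∀ ξ : ℝ, α ^ 2 * γ * (fourierHat (⇑g) ξ).re * ξ ^ 2 /
      ((1 + β ^ 2 * ξ ^ 2) ^ 2 + α ^ 2 * (0:ℝ) ^ 2 * ξ ^ 2) =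
      α ^ 2 * γ * ((fourierHat (⇑g) ξ).re * ξ ^ 2 / (1 + β ^ 2 * ξ ^ 2) ^ 2) := by
    intro ξ
    rw [mul_div_assoc']
    ring_nf
  rw [integral_congr_ae (Eventually.of_forall h), integral_const_mul]

lemma velInt_anti (hα : 0 < α) (hγ : 0 < γ)
    (hg_pos : ∀ ξ, 0 ≤ (fourierHat (⇑g) ξ).re)
    (hg_int : IntegrableOn
      (fun ξ => (fourierHat (⇑g) ξ).re * ξ ^ 2 / (1 + β ^ 2 * ξ ^ 2) ^ 2) (Set.Ioi 0))
    (hg_intpos : 0 < ∫ ξ in Set.Ioi (0 : ℝ),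
      (fourierHat (⇑g) ξ).re * ξ ^ 2 / (1 + β ^ 2 * ξ ^ 2) ^ 2)
    {v₁ v₂ : ℝ} (hv1 : 0 ≤ v₁) (hv12 : v₁ < v₂) :
    velInt α β γ (⇑g) v₂ < velInt α β γ (⇑g) v₁ := by
  have hbase_nn : (0 : ℝ → ℝ) ≤ᵐ[volume.restrict (Set.Ioi 0)]
      fun ξ => (fourierHat (⇑g) ξ).re * ξ ^ 2 / (1 + β ^ 2 * ξ ^ 2) ^ 2 := by
    filter_upwards with ξ
    exact div_nonneg (mul_nonneg (hg_pos ξ) (sq_nonneg ξ)) (by positivity)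
  have hS : 0 < volume (Function.support
      (fun ξ => (fourierHat (⇑g) ξ).re * ξ ^ 2 / (1 + β ^ 2 * ξ ^ 2) ^ 2) ∩ Set.Ioi 0) :=
    (setIntegral_pos_iff_support_of_nonneg_ae hbase_nn hg_int).1 hg_intpos
  have hkey : ∀ ξ ∈ Function.support
      (fun ξ => (fourierHat (⇑g) ξ).re * ξ ^ 2 / (1 + β ^ 2 * ξ ^ 2) ^ 2) ∩ Set.Ioi 0,
      0 < α ^ 2 * γ * (fourierHat (⇑g) ξ).re * ξ ^ 2 /
          ((1 + β ^ 2 * ξ ^ 2) ^ 2 + α ^ 2 * v₁ ^ 2 * ξ ^ 2) -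
        α ^ 2 * γ * (fourierHat (⇑g) ξ).re * ξ ^ 2 /
          ((1 + β ^ 2 * ξ ^ 2) ^ 2 + α ^ 2 * v₂ ^ 2 * ξ ^ 2) := by
    rintro ξ ⟨hsp, hξ⟩
    have hξpos : (0:ℝ) < ξ := hξ
    have hHpos : 0 < (fourierHat (⇑g) ξ).re := by
      rcases lt_or_eq_of_le (hg_pos ξ) with h | h
      · exact h
      · exfalso; apply hsp; simp [← h]
    have hNpos : 0 < α ^ 2 * γ * (fourierHat (⇑g) ξ).re * ξ ^ 2 := by positivity
    have hd12 : (1 + β ^ 2 * ξ ^ 2) ^ 2 + α ^ 2 * v₁ ^ 2 * ξ ^ 2 <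
        (1 + β ^ 2 * ξ ^ 2) ^ 2 + α ^ 2 * v₂ ^ 2 * ξ ^ 2 := by
      have hsq : v₁ ^ 2 < v₂ ^ 2 := by nlinarith
      have hc : 0 < α ^ 2 * ξ ^ 2 := by positivity
      nlinarith
    have := div_lt_div_of_pos_left hNpos (vel_denom_pos α β v₁ ξ) hd12
    linarith
  have hdiff_nn : (0 : ℝ → ℝ) ≤ᵐ[volume.restrict (Set.Ioi 0)] fun ξ =>
      α ^ 2 * γ * (fourierHat (⇑g) ξ).re * ξ ^ 2 /
        ((1 + β ^ 2 * ξ ^ 2) ^ 2 + α ^ 2 * v₁ ^ 2 * ξ ^ 2) -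
      α ^ 2 * γ * (fourierHat (⇑g) ξ).re * ξ ^ 2 /
        ((1 + β ^ 2 * ξ ^ 2) ^ 2 + α ^ 2 * v₂ ^ 2 * ξ ^ 2) := by
    filter_upwards with ξ
    simp only [Pi.zero_apply, sub_nonneg]
    apply div_le_div_of_nonneg_left (vel_num_nonneg hγ hg_pos ξ) (vel_denom_pos α β v₁ ξ)
    have hsq : v₁ ^ 2 ≤ v₂ ^ 2 := pow_le_pow_left₀ hv1 hv12.le 2
    have h2 : α ^ 2 * v₁ ^ 2 * ξ ^ 2 ≤ α ^ 2 * v₂ ^ 2 * ξ ^ 2 :=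
      mul_le_mul_of_nonneg_right (mul_le_mul_of_nonneg_left hsq (sq_nonneg α)) (sq_nonneg ξ)
    linarith
  have hdiff_int : IntegrableOn (fun ξ =>
      α ^ 2 * γ * (fourierHat (⇑g) ξ).re * ξ ^ 2 /
        ((1 + β ^ 2 * ξ ^ 2) ^ 2 + α ^ 2 * v₁ ^ 2 * ξ ^ 2) -
      α ^ 2 * γ * (fourierHat (⇑g) ξ).re * ξ ^ 2 /
        ((1 + β ^ 2 * ξ ^ 2) ^ 2 + α ^ 2 * v₂ ^ 2 * ξ ^ 2)) (Set.Ioi 0) :=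
    (vel_integrable hγ hg_pos hg_int v₁).sub (vel_integrable hγ hg_pos hg_int v₂)
  have hsupp : 0 < volume (Function.support (fun ξ =>
      α ^ 2 * γ * (fourierHat (⇑g) ξ).re * ξ ^ 2 /
        ((1 + β ^ 2 * ξ ^ 2) ^ 2 + α ^ 2 * v₁ ^ 2 * ξ ^ 2) -
      α ^ 2 * γ * (fourierHat (⇑g) ξ).re * ξ ^ 2 /
        ((1 + β ^ 2 * ξ ^ 2) ^ 2 + α ^ 2 * v₂ ^ 2 * ξ ^ 2)) ∩ Set.Ioi 0) := by
    refine lt_of_lt_of_le hS (measure_mono ?_)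
    rintro ξ ⟨hsp, hξ⟩
    exact ⟨(hkey ξ ⟨hsp, hξ⟩).ne', hξ⟩
  have hpos : 0 < ∫ ξ in Set.Ioi (0:ℝ),
      (α ^ 2 * γ * (fourierHat (⇑g) ξ).re * ξ ^ 2 /
        ((1 + β ^ 2 * ξ ^ 2) ^ 2 + α ^ 2 * v₁ ^ 2 * ξ ^ 2) -
      α ^ 2 * γ * (fourierHat (⇑g) ξ).re * ξ ^ 2 /
        ((1 + β ^ 2 * ξ ^ 2) ^ 2 + α ^ 2 * v₂ ^ 2 * ξ ^ 2)) :=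
    (setIntegral_pos_iff_support_of_nonneg_ae hdiff_nn hdiff_int).2 hsupp
  rw [integral_sub (vel_integrable hγ hg_pos hg_int v₁)
    (vel_integrable hγ hg_pos hg_int v₂)] at hpos
  unfold velInt
  linarith

lemma velInt_continuous (hγ : 0 < γ)
    (hg_pos : ∀ ξ, 0 ≤ (fourierHat (⇑g) ξ).re)
    (hg_int : IntegrableOn
      (fun ξ => (fourierHat (⇑g) ξ).re * ξ ^ 2 / (1 + β ^ 2 * ξ ^ 2) ^ 2) (Set.Ioi 0)) :
    Continuous (velInt α β γ (⇑g)) := by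
  unfold velInt
  apply MeasureTheory.continuous_of_dominated (fun v => vel_meas v) ?_
    (hg_int.const_mul (α ^ 2 * γ)) ?_
  · intro v
    filter_upwards with ξ
    rw [Real.norm_eq_abs, _root_.abs_of_nonneg (vel_f_nonneg hγ hg_pos v ξ)]
    exact vel_f_le hγ hg_pos v ξ
  · filter_upwards with ξ
    apply Continuous.div continuous_const (by continuity)
    intro v; exact (vel_denom_pos α β v ξ).ne'

lemma velInt_tendsto (hα : 0 < α) (hγ : 0 < γ)
    (hg_pos : ∀ ξ, 0 ≤ (fourierHat (⇑g) ξ).re)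
    (hg_int : IntegrableOn
      (fun ξ => (fourierHat (⇑g) ξ).re * ξ ^ 2 / (1 + β ^ 2 * ξ ^ 2) ^ 2) (Set.Ioi 0)) :
    Tendsto (velInt α β γ (⇑g)) atTop (𝓝 0) := by
  unfold velInt
  have key : Tendsto (fun v : ℝ => ∫ ξ in Set.Ioi (0:ℝ),
      α ^ 2 * γ * (fourierHat (⇑g) ξ).re * ξ ^ 2 /
        ((1 + β ^ 2 * ξ ^ 2) ^ 2 + α ^ 2 * v ^ 2 * ξ ^ 2)) atTop
      (𝓝 (∫ ξ in Set.Ioi (0:ℝ), (0:ℝ))) := by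
    apply tendsto_integral_filter_of_dominated_convergence
      (fun ξ => α ^ 2 * γ * ((fourierHat (⇑g) ξ).re * ξ ^ 2 / (1 + β ^ 2 * ξ ^ 2) ^ 2))
      (Eventually.of_forall fun v => vel_meas v) ?_ (hg_int.const_mul (α ^ 2 * γ)) ?_
    · filter_upwards with v
      filter_upwards with ξ
      rw [Real.norm_eq_abs, _root_.abs_of_nonneg (vel_f_nonneg hγ hg_pos v ξ)]
      exact vel_f_le hγ hg_pos v ξ
    · rw [ae_restrict_iff' measurableSet_Ioi]
      filter_upwards with ξ hξ
      have hξpos : (0:ℝ) < ξ := hξ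
      have hξ2 : (0:ℝ) < ξ ^ 2 := by positivity
      have hden : Tendsto (fun v : ℝ => (1 + β ^ 2 * ξ ^ 2) ^ 2 + α ^ 2 * v ^ 2 * ξ ^ 2)
          atTop atTop := by
        apply tendsto_atTop_add_const_left
        have h1 : Tendsto (fun v : ℝ => v ^ 2) atTop atTop :=
          tendsto_pow_atTop two_ne_zero
        exact (h1.const_mul_atTop (show (0:ℝ) < α ^ 2 by positivity)).atTop_mul_const hξ2
      exact Tendsto.div_atTop tendsto_const_nhds hden
  simpa using key

end Aux

/-- the velocity equation
`(η/π) ∫₀^∞ α²γ ĝ(ξ) ξ²/((1+β²ξ²)² + α²v²ξ²) dξ = 1`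
admits a solution `v > 0` iff `η > η* = (π/(α²γ)) (∫₀^∞ ĝ(ξ) ξ²/(1+β²ξ²)² dξ)⁻¹`,
and such a positive solution is unique. -/
theorem traveling_pulse_velocity_exists_iff
    (α β γ η : ℝ) (hα : 0 < α) (hβ : 0 < β) (hγ : 0 < γ) (hη : 0 < η)
    (g : SchwartzMap ℝ ℝ) (hg_even : ∀ x, g (-x) = g x)
    (hg_pos : ∀ ξ, 0 ≤ (fourierHat (⇑g) ξ).re)
    (hg_int : IntegrableOn
      (fun ξ => (fourierHat (⇑g) ξ).re * ξ ^ 2 / (1 + β ^ 2 * ξ ^ 2) ^ 2) (Set.Ioi 0))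
    (hg_intpos : 0 < ∫ ξ in Set.Ioi (0 : ℝ),
      (fourierHat (⇑g) ξ).re * ξ ^ 2 / (1 + β ^ 2 * ξ ^ 2) ^ 2) :
    ((∃ v > 0, (η / Real.pi) *
        ∫ ξ in Set.Ioi (0 : ℝ),
          α ^ 2 * γ * (fourierHat (⇑g) ξ).re * ξ ^ 2 /
            ((1 + β ^ 2 * ξ ^ 2) ^ 2 + α ^ 2 * v ^ 2 * ξ ^ 2) = 1) ↔
      η > Real.pi / (α ^ 2 * γ) *
        (∫ ξ in Set.Ioi (0 : ℝ),
          (fourierHat (⇑g) ξ).re * ξ ^ 2 / (1 + β ^ 2 * ξ ^ 2) ^ 2)⁻¹) ∧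
    (∀ v₁ v₂, 0 < v₁ → 0 < v₂ →
      (η / Real.pi) *
        ∫ ξ in Set.Ioi (0 : ℝ),
          α ^ 2 * γ * (fourierHat (⇑g) ξ).re * ξ ^ 2 /
            ((1 + β ^ 2 * ξ ^ 2) ^ 2 + α ^ 2 * v₁ ^ 2 * ξ ^ 2) = 1 →
      (η / Real.pi) *
        ∫ ξ in Set.Ioi (0 : ℝ),
          α ^ 2 * γ * (fourierHat (⇑g) ξ).re * ξ ^ 2 /
            ((1 + β ^ 2 * ξ ^ 2) ^ 2 + α ^ 2 * v₂ ^ 2 * ξ ^ 2) = 1 →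
      v₁ = v₂) := by
  have hπ : (0 : ℝ) < Real.pi := Real.pi_pos
  have hJpos : 0 < ∫ ξ in Set.Ioi (0 : ℝ),
      (fourierHat (⇑g) ξ).re * ξ ^ 2 / (1 + β ^ 2 * ξ ^ 2) ^ 2 := hg_intpos
  suffices h : ((∃ v > 0, η / Real.pi * velInt α β γ (⇑g) v = 1) ↔
        η > Real.pi / (α ^ 2 * γ) *
          (∫ ξ in Set.Ioi (0 : ℝ),
            (fourierHat (⇑g) ξ).re * ξ ^ 2 / (1 + β ^ 2 * ξ ^ 2) ^ 2)⁻¹) ∧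
      (∀ v₁ v₂, 0 < v₁ → 0 < v₂ → η / Real.pi * velInt α β γ (⇑g) v₁ = 1 →
        η / Real.pi * velInt α β γ (⇑g) v₂ = 1 → v₁ = v₂) by
    exact h
  set J := ∫ ξ in Set.Ioi (0 : ℝ),
      (fourierHat (⇑g) ξ).re * ξ ^ 2 / (1 + β ^ 2 * ξ ^ 2) ^ 2 with hJdef
  have hI0 : velInt α β γ (⇑g) 0 = α ^ 2 * γ * J := velInt_zero
  have hK : 0 < α ^ 2 * γ * J := by positivity
  have hequiv : (Real.pi / (α ^ 2 * γ) * J⁻¹ < η) ↔ 1 < η / Real.pi * (α ^ 2 * γ * J) := by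
    have hJne : J ≠ 0 := hJpos.ne'
    have hane : α ^ 2 * γ ≠ 0 := by positivity
    rw [show Real.pi / (α ^ 2 * γ) * J⁻¹ = Real.pi / (α ^ 2 * γ * J) by
      field_simp]
    rw [div_lt_iff₀ hK, div_mul_eq_mul_div, lt_div_iff₀ hπ, one_mul]
  constructor
  · constructor
    · rintro ⟨v, hv, hveq⟩
      have h1 : velInt α β γ (⇑g) v < velInt α β γ (⇑g) 0 :=
        velInt_anti hα hγ hg_pos hg_int hg_intpos le_rfl hv
      have h2 : η / Real.pi * velInt α β γ (⇑g) v < η / Real.pi * velInt α β γ (⇑g) 0 :=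
        mul_lt_mul_of_pos_left h1 (by positivity)
      rw [hveq, hI0] at h2
      exact hequiv.2 h2
    · intro hgt
      have hG0 : 1 < η / Real.pi * velInt α β γ (⇑g) 0 := by
        rw [hI0]; exact hequiv.1 hgt
      have hGtop : Tendsto (fun v => η / Real.pi * velInt α β γ (⇑g) v) atTop
          (𝓝 (η / Real.pi * 0)) :=
        (velInt_tendsto hα hγ hg_pos hg_int).const_mul _
      rw [mul_zero] at hGtop
      obtain ⟨V, hV1, hV0⟩ :=
        ((hGtop.eventually_lt_const one_pos).and (eventually_gt_atTop (0:ℝ))).exists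
      have hcont : ContinuousOn (fun v => η / Real.pi * velInt α β γ (⇑g) v) (Set.Icc 0 V) :=
        (continuous_const.mul (velInt_continuous hγ hg_pos hg_int)).continuousOn
      have hmem : (1:ℝ) ∈ Set.Ioo (η / Real.pi * velInt α β γ (⇑g) V)
          (η / Real.pi * velInt α β γ (⇑g) 0) := ⟨hV1, hG0⟩
      obtain ⟨v, hvIoo, hveq⟩ := intermediate_value_Ioo' hV0.le hcont hmem
      exact ⟨v, hvIoo.1, hveq⟩
  · intro v₁ v₂ h1 h2 he1 he2
    by_contra hne
    rcases lt_or_gt_of_ne hne with h | h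
    · have hlt := mul_lt_mul_of_pos_left
        (velInt_anti hα hγ hg_pos hg_int hg_intpos h1.le h)
        (show (0:ℝ) < η / Real.pi by positivity)
      rw [he1, he2] at hlt
      exact lt_irrefl 1 hlt
    · have hlt := mul_lt_mul_of_pos_left
        (velInt_anti hα hγ hg_pos hg_int hg_intpos h2.le h)
        (show (0:ℝ) < η / Real.pi by positivity)
      rw [he1, he2] at hlt
      exact lt_irrefl 1 hlt

end
end

section
/- Let α, β, γ > 0. For ε > 0 let g_ε(x) = (1/(ε√π)) e^{−x²/ε²}, whose Fourier transform is ĝ_ε(ξ) = e^{−ε²ξ²/4}, and define the critical stiffness η*_ε = (π/(α²γ)) · (∫_0^∞ ĝ_ε(ξ) ξ²/(1 + β²ξ²)² dξ)^{−1}. Then ε ↦ η*_ε is monotone nondecreasing and lim_{ε→0⁺} η*_ε = 4β³/(α²γ). -/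
open MeasureTheory Real Complex

noncomputable section

/-- The Gaussian approximation of the Dirac mass: `g_ε(x) = (1/(ε√π)) e^{-x²/ε²}`. -/
def gaussApprox (ε x : ℝ) : ℝ := (1 / (ε * Real.sqrt Real.pi)) * Real.exp (-x ^ 2 / ε ^ 2)

/-- The critical stiffness `η*_ε = (π/(α²γ)) (∫₀^∞ ĝ_ε(ξ) ξ²/(1+β²ξ²)² dξ)⁻¹`,
written with the explicit Fourier transform `ĝ_ε(ξ) = e^{-ε²ξ²/4}`. -/
def etaStar (α β γ ε : ℝ) : ℝ :=
  Real.pi / (α ^ 2 * γ) *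
    (∫ ξ in Set.Ioi (0 : ℝ),
      Real.exp (-(ε ^ 2 * ξ ^ 2) / 4) * ξ ^ 2 / (1 + β ^ 2 * ξ ^ 2) ^ 2)⁻¹

section Aux
open Set Filter

lemma antideriv_hasDerivAt' (β : ℝ) (hβ : 0 < β) (ξ : ℝ) :
    HasDerivAt (fun ξ : ℝ => (1/(2*β^3)) * (Real.arctan (β*ξ) - β*ξ/(1+β^2*ξ^2)))
      (ξ^2/(1+β^2*ξ^2)^2) ξ := by
  have hden : (0:ℝ) < 1 + β^2*ξ^2 := by positivity
  have h1 : HasDerivAt (fun ξ : ℝ => Real.arctan (β*ξ)) (β/(1+β^2*ξ^2)) ξ := by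
    have := (Real.hasDerivAt_arctan (β*ξ)).comp ξ ((hasDerivAt_id ξ).const_mul β)
    refine this.congr_deriv ?_
    field_simp
  have h2 : HasDerivAt (fun ξ : ℝ => β*ξ/(1+β^2*ξ^2))
      ((β*(1+β^2*ξ^2) - β*ξ*(2*β^2*ξ))/(1+β^2*ξ^2)^2) ξ := by
    have hu : HasDerivAt (fun ξ : ℝ => β*ξ) β ξ := by
      simpa using (hasDerivAt_id ξ).const_mul β
    have hv : HasDerivAt (fun ξ : ℝ => 1+β^2*ξ^2) (2*β^2*ξ) ξ := by
      have := ((hasDerivAt_pow 2 ξ).const_mul (β^2)).const_add 1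
      refine this.congr_deriv ?_
      ring
    exact hu.div hv hden.ne'
  have := ((h1.sub h2).const_mul (1/(2*β^3)))
  refine this.congr_deriv ?_
  field_simp
  ring

lemma tendsto_antideriv' (β : ℝ) (hβ : 0 < β) :
    Tendsto (fun ξ : ℝ => (1/(2*β^3)) * (Real.arctan (β*ξ) - β*ξ/(1+β^2*ξ^2)))
      atTop (nhds (π/(4*β^3))) := by
  have h1 : Tendsto (fun ξ : ℝ => Real.arctan (β*ξ)) atTop (nhds (π/2)) :=
    (Real.tendsto_arctan_atTop.mono_right nhdsWithin_le_nhds).comp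
      (tendsto_id.const_mul_atTop hβ)
  have h2 : Tendsto (fun ξ : ℝ => β*ξ/(1+β^2*ξ^2)) atTop (nhds 0) := by
    have hnum : Tendsto (fun ξ : ℝ => β/ξ) atTop (nhds 0) :=
      Tendsto.div_atTop (tendsto_const_nhds : Tendsto _ atTop (nhds β)) tendsto_id
    have hd0 : Tendsto (fun ξ : ℝ => 1/ξ^2) atTop (nhds 0) :=
      Tendsto.div_atTop (tendsto_const_nhds : Tendsto (fun _ : ℝ => (1:ℝ)) atTop (nhds 1))
        (tendsto_pow_atTop two_ne_zero)
    have hden : Tendsto (fun ξ : ℝ => 1/ξ^2+β^2) atTop (nhds (0 + β^2)) :=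
      hd0.add tendsto_const_nhds
    have key := hnum.div hden (by positivity)
    rw [zero_div] at key
    apply key.congr'
    filter_upwards [eventually_gt_atTop (0:ℝ)] with ξ hξ
    rw [Pi.div_apply]
    field_simp
  have := (h1.sub h2).const_mul (1/(2*β^3))
  convert this using 2
  ring

lemma base_integral' (β : ℝ) (hβ : 0 < β) :
    (∫ ξ in Ioi (0:ℝ), ξ^2/(1+β^2*ξ^2)^2) = π/(4*β^3) ∧
    IntegrableOn (fun ξ : ℝ => ξ^2/(1+β^2*ξ^2)^2) (Ioi 0) := by
  have hderiv : ∀ x ∈ Ici (0:ℝ),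
      HasDerivAt (fun ξ : ℝ => (1/(2*β^3)) * (Real.arctan (β*ξ) - β*ξ/(1+β^2*ξ^2)))
        (x^2/(1+β^2*x^2)^2) x := fun x _ => antideriv_hasDerivAt' β hβ x
  have hpos : ∀ x ∈ Ioi (0:ℝ), 0 ≤ x^2/(1+β^2*x^2)^2 := fun x _ => by positivity
  constructor
  · have := integral_Ioi_of_hasDerivAt_of_nonneg' hderiv hpos (tendsto_antideriv' β hβ)
    simpa using this
  · exact integrableOn_Ioi_deriv_of_nonneg' hderiv hpos (tendsto_antideriv' β hβ)

lemma h_integrable' (β ε : ℝ) (hβ : 0 < β) :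
    IntegrableOn (fun ξ : ℝ => Real.exp (-(ε^2*ξ^2)/4) * ξ^2/(1+β^2*ξ^2)^2) (Ioi 0) := by
  refine Integrable.mono' (base_integral' β hβ).2 ?_ ?_
  · apply Measurable.aestronglyMeasurable
    fun_prop
  · filter_upwards [ae_restrict_mem measurableSet_Ioi] with ξ _
    have h1 : Real.exp (-(ε^2*ξ^2)/4) ≤ 1 :=
      Real.exp_le_one_iff.2 (by rw [neg_div]; exact neg_nonpos.2 (by positivity))
    rw [Real.norm_of_nonneg (by positivity)]
    rw [mul_div_assoc]
    calc Real.exp (-(ε^2*ξ^2)/4) * (ξ^2/(1+β^2*ξ^2)^2) ≤ 1 * (ξ^2/(1+β^2*ξ^2)^2) := by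
          apply mul_le_mul_of_nonneg_right h1 (by positivity)
      _ = ξ^2/(1+β^2*ξ^2)^2 := one_mul _

lemma h_pos' (β ε : ℝ) (hβ : 0 < β) :
    0 < ∫ ξ in Ioi (0:ℝ), Real.exp (-(ε^2*ξ^2)/4) * ξ^2/(1+β^2*ξ^2)^2 := by
  rw [setIntegral_pos_iff_support_of_nonneg_ae]
  · have hsub : Ioi (0:ℝ) ⊆ Function.support
        (fun ξ : ℝ => Real.exp (-(ε^2*ξ^2)/4) * ξ^2/(1+β^2*ξ^2)^2) ∩ Ioi 0 := by
      intro x hx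
      have hx' : (0:ℝ) < x := hx
      refine ⟨?_, hx⟩
      simp only [Function.mem_support]
      positivity
    refine lt_of_lt_of_le ?_ (measure_mono hsub)
    simp [Real.volume_Ioi]
  · filter_upwards [ae_restrict_mem measurableSet_Ioi] with ξ _
    positivity
  · exact h_integrable' β ε hβ

lemma I_mono' (β : ℝ) (hβ : 0 < β) {ε₁ ε₂ : ℝ} (h12 : ε₁ ≤ ε₂) (h1 : 0 < ε₁) :
    (∫ ξ in Ioi (0:ℝ), Real.exp (-(ε₂^2*ξ^2)/4) * ξ^2/(1+β^2*ξ^2)^2)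
      ≤ ∫ ξ in Ioi (0:ℝ), Real.exp (-(ε₁^2*ξ^2)/4) * ξ^2/(1+β^2*ξ^2)^2 := by
  apply setIntegral_mono_on (h_integrable' β ε₂ hβ) (h_integrable' β ε₁ hβ) measurableSet_Ioi
  intro ξ hξ
  have : Real.exp (-(ε₂^2*ξ^2)/4) ≤ Real.exp (-(ε₁^2*ξ^2)/4) := by
    apply Real.exp_le_exp.2
    have : ε₁^2 ≤ ε₂^2 := by nlinarith
    nlinarith [sq_nonneg ξ]
  rw [mul_div_assoc, mul_div_assoc]
  exact mul_le_mul_of_nonneg_right this (by positivity)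

lemma I_tendsto' (β : ℝ) (hβ : 0 < β) :
    Tendsto (fun ε : ℝ => ∫ ξ in Ioi (0:ℝ), Real.exp (-(ε^2*ξ^2)/4) * ξ^2/(1+β^2*ξ^2)^2)
      (nhdsWithin 0 (Ioi 0)) (nhds (π/(4*β^3))) := by
  rw [← (base_integral' β hβ).1]
  apply tendsto_integral_filter_of_dominated_convergence
    (fun ξ : ℝ => ξ^2/(1+β^2*ξ^2)^2)
  · filter_upwards with ε
    apply Measurable.aestronglyMeasurable; fun_prop
  · filter_upwards with ε
    filter_upwards [ae_restrict_mem measurableSet_Ioi] with ξ _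
    have h1 : Real.exp (-(ε^2*ξ^2)/4) ≤ 1 :=
      Real.exp_le_one_iff.2 (by rw [neg_div]; exact neg_nonpos.2 (by positivity))
    rw [Real.norm_of_nonneg (by positivity), mul_div_assoc]
    calc Real.exp (-(ε^2*ξ^2)/4) * (ξ^2/(1+β^2*ξ^2)^2) ≤ 1 * (ξ^2/(1+β^2*ξ^2)^2) :=
          mul_le_mul_of_nonneg_right h1 (by positivity)
      _ = ξ^2/(1+β^2*ξ^2)^2 := one_mul _
  · exact (base_integral' β hβ).2
  · filter_upwards with ξ
    have hc : ContinuousAt (fun ε : ℝ => Real.exp (-(ε^2*ξ^2)/4) * ξ^2/(1+β^2*ξ^2)^2) 0 := by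
      fun_prop
    have := hc.tendsto.mono_left (nhdsWithin_le_nhds (s := Ioi (0:ℝ)))
    simpa using this

lemma fourier_gauss' (ε : ℝ) (hε : 0 < ε) (ξ : ℝ) :
    fourierHat (gaussApprox ε) ξ = (Real.exp (-(ε ^ 2 * ξ ^ 2) / 4) : ℝ) := by
  have hε2 : (ε:ℂ)^2 ≠ 0 := by
    simp [pow_eq_zero_iff]
    exact_mod_cast hε.ne'
  have hb : (0:ℝ) < ((1/(ε^2 : ℝ) : ℝ) : ℂ).re := by
    rw [Complex.ofReal_re]; positivity
  have key := fourierIntegral_gaussian hb (-ξ : ℂ)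
  unfold fourierHat gaussApprox
  have heq : ∀ x : ℝ, ((gaussApprox ε x : ℝ) : ℂ) * Complex.exp (-(Complex.I * x * ξ))
      = ((1 / (ε * Real.sqrt Real.pi) : ℝ) : ℂ) *
        (Complex.exp (Complex.I * (-ξ:ℂ) * x) * Complex.exp (-((1/(ε^2:ℝ):ℝ):ℂ) * x ^ 2)) := by
    intro x
    unfold gaussApprox
    push_cast
    rw [mul_assoc, ← Complex.exp_add, ← Complex.exp_add]
    congr 1
    field_simp
    ring
  calc (∫ x : ℝ, ((gaussApprox ε x : ℝ) : ℂ) * Complex.exp (-(Complex.I * x * ξ)))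
      = ∫ x : ℝ, ((1 / (ε * Real.sqrt Real.pi) : ℝ) : ℂ) *
        (Complex.exp (Complex.I * (-ξ:ℂ) * x) * Complex.exp (-((1/(ε^2:ℝ):ℝ):ℂ) * x ^ 2)) := by
        exact integral_congr_ae (Filter.Eventually.of_forall heq)
    _ = ((1 / (ε * Real.sqrt Real.pi) : ℝ) : ℂ) *
        ∫ x : ℝ, Complex.exp (Complex.I * (-ξ:ℂ) * x) * Complex.exp (-((1/(ε^2:ℝ):ℝ):ℂ) * x ^ 2) :=
        integral_const_mul _ _
    _ = ((1 / (ε * Real.sqrt Real.pi) : ℝ) : ℂ) *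
        ((↑Real.pi / ((1/(ε^2:ℝ):ℝ):ℂ)) ^ (1 / 2 : ℂ) *
          Complex.exp (-(-ξ:ℂ) ^ 2 / (4 * ((1/(ε^2:ℝ):ℝ):ℂ)))) := by rw [key]
    _ = (Real.exp (-(ε ^ 2 * ξ ^ 2) / 4) : ℝ) := by
        have h1 : (↑Real.pi / ((1/(ε^2:ℝ):ℝ):ℂ)) = ((Real.pi * ε^2 : ℝ) : ℂ) := by
          push_cast
          field_simp
        rw [h1]
        have h2 : ((Real.pi * ε^2 : ℝ) : ℂ) ^ (1/2 : ℂ)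
            = ((Real.sqrt Real.pi * ε : ℝ) : ℂ) := by
          rw [show (1/2:ℂ) = ((1/2:ℝ):ℂ) by norm_num,
            ← Complex.ofReal_cpow (by positivity)]
          norm_cast
          rw [← Real.sqrt_eq_rpow, Real.sqrt_mul Real.pi_pos.le, Real.sqrt_sq hε.le]
        rw [h2]
        have h3 : (-(-ξ:ℂ) ^ 2 / (4 * ((1/(ε^2:ℝ):ℝ):ℂ))) = ((-(ε^2*ξ^2)/4 : ℝ) : ℂ) := by
          push_cast
          field_simp
        rw [h3, ← Complex.ofReal_exp, ← mul_assoc, ← Complex.ofReal_mul]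
        have h4 : (1 / (ε * Real.sqrt Real.pi)) * (Real.sqrt Real.pi * ε) = 1 := by
          have : Real.sqrt Real.pi ≠ 0 := by positivity
          field_simp
        rw [h4]
        simp

end Aux

/-- `ĝ_ε(ξ) = e^{-ε²ξ²/4}`, the critical stiffness `ε ↦ η*_ε` is monotone
nondecreasing, and `η*_ε → 4β³/(α²γ)` as `ε → 0⁺`. -/
theorem etaStar_monotone_tendsto
    (α β γ : ℝ) (hα : 0 < α) (hβ : 0 < β) (hγ : 0 < γ) :
    (∀ ε > 0, ∀ ξ : ℝ, fourierHat (gaussApprox ε) ξ = (Real.exp (-(ε ^ 2 * ξ ^ 2) / 4) : ℝ)) ∧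
    (∀ ε₁ ε₂ : ℝ, 0 < ε₁ → ε₁ ≤ ε₂ → etaStar α β γ ε₁ ≤ etaStar α β γ ε₂) ∧
    Filter.Tendsto (etaStar α β γ) (nhdsWithin 0 (Set.Ioi 0))
      (nhds (4 * β ^ 3 / (α ^ 2 * γ))) := by
  have hc : (0:ℝ) < Real.pi / (α ^ 2 * γ) := by positivity
  refine ⟨fun ε hε ξ => fourier_gauss' ε hε ξ, ?_, ?_⟩
  · intro ε₁ ε₂ h1 h12
    unfold etaStar
    apply mul_le_mul_of_nonneg_left _ hc.le
    exact inv_anti₀ (h_pos' β ε₂ hβ) (I_mono' β hβ h12 h1)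
  · have hne : π/(4*β^3) ≠ 0 := by positivity
    have := ((I_tendsto' β hβ).inv₀ hne).const_mul (Real.pi / (α ^ 2 * γ))
    have hval : Real.pi / (α ^ 2 * γ) * (π/(4*β^3))⁻¹ = 4 * β ^ 3 / (α ^ 2 * γ) := by
      rw [inv_div]
      field_simp
    rw [hval] at this
    exact this

end
end

section
/- Let g : ℝ → ℝ be integrable and x_c : [0,∞) → ℝ continuous. Suppose s : [0,∞) × ℝ → ℝ is C¹ in t and C² in x, solves ∂_t s(t,x) + s(t,x) − ∂²_{xx} s(t,x) = g(x − x_c(t)) for all t > 0 and x ∈ ℝ, and suppose that for every t ≥ 0 the functions s(t,·) and ∂_t s(t,·) are integrable, that ∂_x s(t,x) → 0 as |x| → ∞, and that d/dt ∫_ℝ s(t,x) dx = ∫_ℝ ∂_t s(t,x) dx. Then for every t ≥ 0, ∫_ℝ s(t,x) dx = e^{−t} ∫_ℝ s(0,x) dx + (1 − e^{−t}) ∫_ℝ g(x) dx. -/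
open MeasureTheory Real

/-- relaxation of the total deformation. If `s` solves
`∂ₜ s + s - ∂ₓₓ s = g(x - x_c(t))` with the stated integrability, decay of `∂ₓ s`,
and differentiation-under-the-integral hypotheses, then
`∫ s(t,·) = e^{-t} ∫ s(0,·) + (1-e^{-t}) ∫ g`. -/
theorem total_deformation_relaxes
    (g : ℝ → ℝ) (hg : Integrable g)
    (x_c : ℝ → ℝ) (hxc : ContinuousOn x_c (Set.Ici 0))
    (s : ℝ → ℝ → ℝ)
    (hreg_t : ∀ x : ℝ, ∀ t > (0 : ℝ), DifferentiableAt ℝ (fun τ => s τ x) t)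
    (hreg_x : ∀ t ≥ (0 : ℝ), ContDiff ℝ 2 (s t))
    (hpde : ∀ t > (0 : ℝ), ∀ x : ℝ,
      deriv (fun τ => s τ x) t + s t x - iteratedDeriv 2 (s t) x = g (x - x_c t))
    (hint : ∀ t ≥ (0 : ℝ), Integrable (s t))
    (hint' : ∀ t ≥ (0 : ℝ), Integrable (fun x => deriv (fun τ => s τ x) t))
    (hdecay : ∀ t ≥ (0 : ℝ),
      Filter.Tendsto (fun x => deriv (s t) x) (Filter.cocompact ℝ) (nhds 0))
    (hswap : ∀ t ≥ (0 : ℝ),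
      HasDerivAt (fun τ => ∫ x : ℝ, s τ x) (∫ x : ℝ, deriv (fun τ => s τ x) t) t) :
    ∀ t ≥ (0 : ℝ),
      ∫ x : ℝ, s t x =
        Real.exp (-t) * (∫ x : ℝ, s 0 x) + (1 - Real.exp (-t)) * ∫ x : ℝ, g x := by
  set F : ℝ → ℝ := fun τ => ∫ x : ℝ, s τ x with hF
  set c : ℝ := ∫ x : ℝ, g x with hc
  -- second derivative integrates to zero
  have hsecond : ∀ t > (0 : ℝ), ∫ x : ℝ, iteratedDeriv 2 (s t) x = 0 := by
    intro t ht
    have ht' := ht.le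
    have hi2 : Integrable (fun x => iteratedDeriv 2 (s t) x) := by
      have : (fun x => iteratedDeriv 2 (s t) x)
          = fun x => deriv (fun τ => s τ x) t + s t x - g (x - x_c t) := by
        funext x
        have := hpde t ht x
        linarith
      rw [this]
      exact ((hint' t ht').add (hint t ht')).sub (hg.comp_sub_right (x_c t))
    have hiter : ∀ x, iteratedDeriv 2 (s t) x = deriv (deriv (s t)) x := by
      intro x
      rw [show (2:ℕ) = 1 + 1 from rfl, iteratedDeriv_succ, iteratedDeriv_one]
    have hder : ∀ x : ℝ, HasDerivAt (deriv (s t)) (iteratedDeriv 2 (s t) x) x := by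
      intro x
      rw [hiter]
      have h1 : Differentiable ℝ (deriv (s t)) :=
        ((hreg_x t ht').iterate_deriv' 1 1).differentiable (by norm_num)
      exact (h1 x).hasDerivAt
    have hdec := hdecay t ht'
    rw [cocompact_eq_atBot_atTop] at hdec
    have hbot : Filter.Tendsto (deriv (s t)) Filter.atBot (nhds 0) :=
      hdec.mono_left le_sup_left
    have htop : Filter.Tendsto (deriv (s t)) Filter.atTop (nhds 0) :=
      hdec.mono_left le_sup_right
    have := integral_of_hasDerivAt_of_tendsto hder hi2 hbot htop
    simpa using this
  -- ODE for F
  have hFder : ∀ t > (0 : ℝ), HasDerivAt F (c - F t) t := by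
    intro t ht
    have key : (∫ x : ℝ, deriv (fun τ => s τ x) t) = c - F t := by
      have heq : (fun x => deriv (fun τ => s τ x) t)
          = fun x => g (x - x_c t) - s t x + iteratedDeriv 2 (s t) x := by
        funext x; have := hpde t ht x; linarith
      have h1 : Integrable (fun x => g (x - x_c t) - s t x) :=
        (hg.comp_sub_right (x_c t)).sub (hint t ht.le)
      have hi2 : Integrable (fun x => iteratedDeriv 2 (s t) x) := by
        have h3 : (fun x => iteratedDeriv 2 (s t) x)
            = fun x => deriv (fun τ => s τ x) t + s t x - g (x - x_c t) := by
          funext x; have := hpde t ht x; linarith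
        rw [h3]
        exact ((hint' t ht.le).add (hint t ht.le)).sub (hg.comp_sub_right (x_c t))
      rw [heq, integral_add h1 hi2,
        integral_sub (hg.comp_sub_right (x_c t)) (hint t ht.le), hsecond t ht,
        integral_sub_right_eq_self g (x_c t)]
      simp [hF, hc]
    have := hswap t ht.le
    rwa [key] at this
  -- G = exp * F
  have hGder : ∀ t > (0 : ℝ),
      HasDerivAt (fun τ => Real.exp τ * F τ) (Real.exp t * c) t := by
    intro t ht
    have : HasDerivAt (fun τ => Real.exp τ * F τ)
        (Real.exp t * F t + Real.exp t * (c - F t)) t := (Real.hasDerivAt_exp t).mul (hFder t ht)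
    convert this using 1
    ring
  have hFcont : ContinuousOn F (Set.Ici 0) := by
    intro t ht
    exact ((hswap t ht).continuousAt).continuousWithinAt
  intro t ht
  rcases eq_or_lt_of_le ht with h0 | h0
  · simp [hF, ← h0]
  · have hcont : ContinuousOn (fun τ => Real.exp τ * F τ) (Set.Icc 0 t) :=
      (Real.continuous_exp.continuousOn).mul
        (hFcont.mono (Set.Icc_subset_Ici_self))
    have hint2 : IntervalIntegrable (fun τ => Real.exp τ * c) volume 0 t :=
      (Continuous.mul Real.continuous_exp continuous_const).intervalIntegrable 0 t
    have hFTC := intervalIntegral.integral_eq_sub_of_hasDerivAt_of_le ht hcont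
      (fun τ hτ => hGder τ hτ.1) hint2
    have hval : ∫ τ in (0:ℝ)..t, Real.exp τ * c = (Real.exp t - 1) * c := by
      rw [intervalIntegral.integral_mul_const, integral_exp]
      simp
    rw [hval] at hFTC
    have hFt : Real.exp t * F t = Real.exp 0 * F 0 + (Real.exp t - 1) * c := by
      linarith
    have hexp : Real.exp (-t) * Real.exp t = 1 := by
      rw [← Real.exp_add]; simp
    have : F t = Real.exp (-t) * F 0 + (1 - Real.exp (-t)) * c := by
      have := congrArg (fun z => Real.exp (-t) * z) hFt
      simp only [Real.exp_zero, one_mul] at this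
      rw [← mul_assoc, hexp, one_mul] at this
      have h2 : Real.exp (-t) * ((Real.exp t - 1) * c)
          = (1 - Real.exp (-t)) * c := by
        rw [← mul_assoc, mul_sub, hexp]; ring
      rw [this, mul_add, h2]
    exact this
end
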